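/- Let U and V be finite nonempty subsets of a commutative group and M ≥ 1 a parameter. Define V_d = V ∩ (d+U) for d ∈ V−U, and let P = {d ∈ V−U : |V_d| ≥ |U||V|/(2|U+V|)}. If |V_d| ≤ M|U||V|/|U+V| for every d ∈ P, then |P| ≥ |U+V|/(2M²). -/

import Mathlib

open Finset Pointwise
open scoped Classical

private lemma pdc_card_inter {G : Type*} [AddCommGroup G] [DecidableEq G]
    (U V : Finset G) (d : G) :
    (V ∩ ({d} + U)).card = ((U ×ˢ V).filter fun p => p.2 - p.1 = d).card := by
  apply Finset.card_bij (fun v _ => (v - d, v))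
  · intro v hv
    simp only [mem_inter, mem_add, mem_singleton] at hv
    simp only [mem_filter, mem_product]
    obtain ⟨h1, e, he, u, hu, rfl⟩ := hv
    subst he
    simp [hu, h1]
  · intro a ha b hb h
    simpa using congrArg Prod.snd h
  · intro p hp
    simp only [mem_filter, mem_product] at hp
    refine ⟨p.2, ?_, ?_⟩
    · simp only [mem_inter, mem_add, mem_singleton]
      exact ⟨hp.1.2, d, rfl, p.1, hp.1.1, by rw [← hp.2]; abel⟩
    · ext <;> simp [← hp.2]

private lemma pdc_sum {G : Type*} [AddCommGroup G] [DecidableEq G] (U V : Finset G) :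
    ∑ d ∈ V - U, ((U ×ˢ V).filter fun p => p.2 - p.1 = d).card = U.card * V.card := by
  rw [← card_product]
  exact (Finset.card_eq_sum_card_fiberwise (fun p hp => by
    rw [mem_coe, mem_product] at hp; exact mem_coe.mpr (sub_mem_sub hp.2 hp.1))).symm

private lemma pdc_energy {G : Type*} [AddCommGroup G] [DecidableEq G] (U V : Finset G) :
    ∑ d ∈ V - U, ((U ×ˢ V).filter fun p => p.2 - p.1 = d).card ^ 2
      = Finset.addEnergy U V := by
  rw [Finset.addEnergy_eq_card_filter]
  have key : (((U ×ˢ V) ×ˢ U ×ˢ V).filter fun q => q.1.2 - q.1.1 = q.2.2 - q.2.1).card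
      = (((U ×ˢ V) ×ˢ U ×ˢ V).filter fun ((a, b), c, d) => a + b = c + d).card := by
    apply Finset.card_bij (fun q _ => ((q.1.1, q.2.2), q.2.1, q.1.2))
    · rintro ⟨⟨a, b⟩, c, e⟩ hq
      simp only [mem_filter, mem_product] at hq ⊢
      refine ⟨⟨⟨hq.1.1.1, hq.1.2.2⟩, hq.1.2.1, hq.1.1.2⟩, ?_⟩
      have h := sub_eq_sub_iff_add_eq_add.mp hq.2
      rw [add_comm a e, add_comm c b]
      exact h.symm
    · rintro ⟨⟨a, b⟩, c, e⟩ _ ⟨⟨a', b'⟩, c', e'⟩ _ h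
      simp only [Prod.mk.injEq] at h ⊢
      tauto
    · rintro ⟨⟨a, b⟩, c, e⟩ hq
      simp only [mem_filter, mem_product] at hq
      refine ⟨((a, e), c, b), ?_, ?_⟩
      · simp only [mem_filter, mem_product]
        refine ⟨⟨⟨hq.1.1.1, hq.1.2.2⟩, hq.1.2.1, hq.1.1.2⟩, ?_⟩
        have h := hq.2
        rw [sub_eq_sub_iff_add_eq_add, add_comm e c, add_comm b a]
        exact h.symm
      · rfl
  rw [← key]
  rw [Finset.card_eq_sum_card_fiberwise (f := fun q => q.1.2 - q.1.1) (t := V - U)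
    (fun q hq => by
      rw [mem_coe, mem_filter, mem_product, mem_product, mem_product] at hq
      exact mem_coe.mpr (sub_mem_sub hq.1.1.2 hq.1.1.1))]
  refine Finset.sum_congr rfl fun d hd => ?_
  rw [sq, ← card_product]
  congr 1
  ext ⟨⟨a, b⟩, c, e⟩
  simp only [Finset.mem_filter, Finset.mem_product]
  constructor
  · rintro ⟨⟨hab, h2⟩, hce, h3⟩
    exact ⟨⟨⟨hab, hce⟩, h2.trans h3.symm⟩, h2⟩
  · rintro ⟨⟨⟨hab, hce⟩, h1⟩, h2⟩
    exact ⟨⟨hab, h2⟩, hce, h1 ▸ h2⟩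

theorem popular_difference_count {G : Type*} [AddCommGroup G] [DecidableEq G]
    (U V : Finset G) (hU : U.Nonempty) (hV : V.Nonempty) (M : ℝ) (hM : 1 ≤ M)
    (hbound : ∀ d ∈ V - U,
      ((V ∩ ({d} + U)).card : ℝ) ≥ (U.card : ℝ) * V.card / (2 * (U + V).card) →
      ((V ∩ ({d} + U)).card : ℝ) ≤ M * U.card * V.card / (U + V).card) :
    (((V - U).filter (fun d =>
        ((V ∩ ({d} + U)).card : ℝ) ≥ (U.card : ℝ) * V.card / (2 * (U + V).card))).card : ℝ)
      ≥ ((U + V).card : ℝ) / (2 * M ^ 2) := by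
  set u : ℝ := (U.card : ℝ) with hu_def
  set v : ℝ := (V.card : ℝ) with hv_def
  set K : ℝ := ((U + V).card : ℝ) with hK_def
  have hu : 0 < u := by rw [hu_def]; exact_mod_cast hU.card_pos
  have hv : 0 < v := by rw [hv_def]; exact_mod_cast hV.card_pos
  have hK : 0 < K := by rw [hK_def]; exact_mod_cast (hU.add hV).card_pos
  have hM0 : 0 < M := lt_of_lt_of_le one_pos hM
  set cond : G → Prop := fun d =>
    ((V ∩ ({d} + U)).card : ℝ) ≥ u * v / (2 * K) with hcond_def
  set P := (V - U).filter cond with hP_def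
  set f : G → ℝ := fun d => (((U ×ˢ V).filter fun p => p.2 - p.1 = d).card : ℝ) with hf_def
  have hfd : ∀ d, ((V ∩ ({d} + U)).card : ℝ) = f d := fun d => by
    simp only [hf_def]; exact_mod_cast congrArg Nat.cast (pdc_card_inter U V d)
  have hf0 : ∀ d, 0 ≤ f d := fun d => Nat.cast_nonneg _
  -- total sum
  have hsum : ∑ d ∈ V - U, f d = u * v := by
    simp only [hf_def]
    rw [hu_def, hv_def]
    exact_mod_cast congrArg (Nat.cast (R := ℝ)) (pdc_sum U V)
  -- energy lower bound
  have hCS : u ^ 2 * v ^ 2 ≤ K * ∑ d ∈ V - U, (f d) ^ 2 := by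
    have h := Finset.le_card_add_mul_addEnergy U V
    rw [← pdc_energy U V] at h
    have h2 := (Nat.cast_le (α := ℝ)).mpr h
    push_cast at h2
    simp only [hf_def, hu_def, hv_def, hK_def]
    exact h2
  -- split the sum
  have hsplit : ∑ d ∈ V - U, (f d) ^ 2
      = ∑ d ∈ P, (f d) ^ 2 + ∑ d ∈ (V - U).filter (fun d => ¬ cond d), (f d) ^ 2 := by
    rw [hP_def]
    exact (Finset.sum_filter_add_sum_filter_not _ _ _).symm
  -- unpopular part
  have hunpop : ∑ d ∈ (V - U).filter (fun d => ¬ cond d), (f d) ^ 2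
      ≤ (u * v / (2 * K)) * (u * v) := by
    calc ∑ d ∈ (V - U).filter (fun d => ¬ cond d), (f d) ^ 2
        ≤ ∑ d ∈ (V - U).filter (fun d => ¬ cond d), (u * v / (2 * K)) * f d := by
          refine Finset.sum_le_sum fun d hd => ?_
          rw [Finset.mem_filter] at hd
          have hlt : f d ≤ u * v / (2 * K) := by
            rw [← hfd d]
            exact le_of_lt (lt_of_not_ge hd.2)
          rw [sq]
          exact mul_le_mul_of_nonneg_right hlt (hf0 d)
      _ = (u * v / (2 * K)) * ∑ d ∈ (V - U).filter (fun d => ¬ cond d), f d := by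
          rw [Finset.mul_sum]
      _ ≤ (u * v / (2 * K)) * (u * v) := by
          refine mul_le_mul_of_nonneg_left ?_ (by positivity)
          exact le_trans (Finset.sum_le_sum_of_subset_of_nonneg (Finset.filter_subset _ _)
            (fun d _ _ => hf0 d)) (le_of_eq hsum)
  -- popular part
  have hpop : ∑ d ∈ P, (f d) ^ 2 ≤ (P.card : ℝ) * (M * u * v / K) ^ 2 := by
    calc ∑ d ∈ P, (f d) ^ 2 ≤ ∑ _d ∈ P, (M * u * v / K) ^ 2 := by
          refine Finset.sum_le_sum fun d hd => ?_
          rw [hP_def, Finset.mem_filter] at hd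
          have hb := hbound d hd.1 hd.2
          rw [hfd d] at hb
          exact pow_le_pow_left₀ (hf0 d) hb 2
      _ = (P.card : ℝ) * (M * u * v / K) ^ 2 := by
          rw [Finset.sum_const, nsmul_eq_mul]
  have key : u ^ 2 * v ^ 2
      ≤ K * ((P.card : ℝ) * (M * u * v / K) ^ 2 + (u * v / (2 * K)) * (u * v)) := by
    calc u ^ 2 * v ^ 2 ≤ K * ∑ d ∈ V - U, (f d) ^ 2 := hCS
      _ ≤ K * ((P.card : ℝ) * (M * u * v / K) ^ 2 + (u * v / (2 * K)) * (u * v)) := by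
          rw [hsplit]
          exact mul_le_mul_of_nonneg_left (add_le_add hpop hunpop) (le_of_lt hK)
  have hKne : K ≠ 0 := ne_of_gt hK
  have hrew : K * ((P.card : ℝ) * (M * u * v / K) ^ 2 + (u * v / (2 * K)) * (u * v))
      = (P.card : ℝ) * M ^ 2 * (u ^ 2 * v ^ 2) / K + u ^ 2 * v ^ 2 / 2 := by
    field_simp
  rw [hrew] at key
  have key2 : u ^ 2 * v ^ 2 / 2 ≤ (P.card : ℝ) * M ^ 2 * (u ^ 2 * v ^ 2) / K := by
    linarith
  have key3 := (div_le_div_iff₀ (show (0:ℝ) < 2 by norm_num) hK).mp key2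
  rw [ge_iff_le, div_le_iff₀ (show (0:ℝ) < 2 * M ^ 2 by positivity)]
  have hA : 0 < u ^ 2 * v ^ 2 := by positivity
  have h4 : u ^ 2 * v ^ 2 * K ≤ u ^ 2 * v ^ 2 * ((P.card : ℝ) * (2 * M ^ 2)) := by
    calc u ^ 2 * v ^ 2 * K ≤ (P.card : ℝ) * M ^ 2 * (u ^ 2 * v ^ 2) * 2 := key3
      _ = u ^ 2 * v ^ 2 * ((P.card : ℝ) * (2 * M ^ 2)) := by ring
  exact le_of_mul_le_mul_left h4 hA
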